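/- (Kierstead) A finite simple graph G = (V,E) is k-choosable if G is L-colorable for every k-list assignment L such that |L(V)| < |V|, where L(V) denotes the union of all lists. -/

import Mathlib

/-- `G` has a proper coloring in which every vertex gets a color from its own list. -/
def ListColorable {V : Type*} (G : SimpleGraph V) (L : V → Finset ℕ) : Prop :=
  ∃ c : V → ℕ, (∀ v, c v ∈ L v) ∧ ∀ ⦃u w⦄, G.Adj u w → c u ≠ c w

/-- `G` is `k`-choosable: `L`-colorable for every list assignment with all lists of size ≥ `k`. -/
def Choosable {V : Type*} (G : SimpleGraph V) (k : ℕ) : Prop :=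
  ∀ L : V → Finset ℕ, (∀ v, k ≤ (L v).card) → ListColorable G L

/-- Kierstead's lemma: `G` is `k`-choosable provided it is `L`-colorable for every
`k`-list assignment `L` whose total number of colors is less than the number of vertices. -/
theorem kierstead_choosable {V : Type*} [Fintype V] [DecidableEq V]
    (G : SimpleGraph V) (k : ℕ)
    (h : ∀ L : V → Finset ℕ, (∀ v, k ≤ (L v).card) →
      (Finset.univ.biUnion L).card < Fintype.card V → ListColorable G L) :
    Choosable G k := by
  intro L hL
  by_cases hHall : ∀ S : Finset V, S.card ≤ (S.biUnion L).card
  · -- Hall's condition holds: a system of distinct representatives is a proper coloring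
    obtain ⟨f, hfinj, hfm⟩ := (Finset.all_card_le_biUnion_card_iff_exists_injective L).mp hHall
    exact ⟨f, hfm, fun u w huw he => huw.ne (hfinj he)⟩
  · push_neg at hHall
    obtain ⟨S0, hS0⟩ := hHall
    -- pick a Hall violator X of maximum cardinality
    set 𝒮 : Finset (Finset V) := Finset.univ.filter (fun S => (S.biUnion L).card < S.card)
      with h𝒮def
    have h𝒮 : 𝒮.Nonempty := ⟨S0, by simp [h𝒮def, hS0]⟩
    obtain ⟨X, hX𝒮, hXmax⟩ := Finset.exists_max_image 𝒮 Finset.card h𝒮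
    have hX : (X.biUnion L).card < X.card := by
      simpa [h𝒮def] using hX𝒮
    have hXne : X.Nonempty := Finset.card_pos.mp (lt_of_le_of_lt (Nat.zero_le _) hX)
    obtain ⟨v0, hv0⟩ := hXne
    have hkLX : k ≤ (X.biUnion L).card :=
      le_trans (hL v0) (Finset.card_le_card (Finset.subset_biUnion_of_mem L hv0))
    obtain ⟨K, hK, hKcard⟩ := Finset.exists_subset_card_eq hkLX
    -- the auxiliary small-pot list assignment
    set L' : V → Finset ℕ := fun v => if v ∈ X then L v else K with hL'def
    have hL' : ∀ v, k ≤ (L' v).card := by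
      intro v
      by_cases hv : v ∈ X <;> simp [hL'def, hv, hL v, hKcard.ge, hKcard]
    have hpot : (Finset.univ.biUnion L').card < Fintype.card V := by
      have hsub : Finset.univ.biUnion L' ⊆ X.biUnion L := by
        intro a ha
        simp only [Finset.mem_biUnion] at ha
        obtain ⟨v, -, hva⟩ := ha
        by_cases hv : v ∈ X
        · simp only [hL'def, if_pos hv] at hva
          exact Finset.subset_biUnion_of_mem L hv hva
        · simp only [hL'def, if_neg hv] at hva
          exact hK hva
      calc (Finset.univ.biUnion L').card ≤ (X.biUnion L).card := Finset.card_le_card hsub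
        _ < X.card := hX
        _ ≤ Fintype.card V := Finset.card_le_univ X
    obtain ⟨c', hc'm, hc'p⟩ := h L' hL' hpot
    have hc'mem : ∀ v ∈ X, c' v ∈ L v := by
      intro v hv
      have := hc'm v
      simpa [hL'def, if_pos hv] using this
    -- Hall for the vertices outside X, with colors outside L(X)
    have hallD : ∀ s : Finset {v // v ∉ X},
        s.card ≤ (s.biUnion (fun v => L v.1 \ X.biUnion L)).card := by
      intro s
      rcases s.eq_empty_or_nonempty with hs | hs
      · simp [hs]
      set T : Finset V := s.image Subtype.val with hTdef
      have hTcard : T.card = s.card := Finset.card_image_of_injective _ Subtype.val_injective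
      have hTne : T.Nonempty := hs.image _
      have hdisj : Disjoint X T := by
        rw [Finset.disjoint_right]
        intro a ha
        simp only [hTdef, Finset.mem_image] at ha
        obtain ⟨⟨a', ha'⟩, -, rfl⟩ := ha
        exact ha'
      have hXTcard : (X ∪ T).card = X.card + T.card := Finset.card_union_of_disjoint hdisj
      have hnot : ¬ ((X ∪ T).biUnion L).card < (X ∪ T).card := by
        intro hlt
        have hmem : X ∪ T ∈ 𝒮 := by simp [h𝒮def, hlt]
        have := hXmax _ hmem
        have hTpos : 0 < T.card := Finset.card_pos.mpr hTne
        omega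
      push_neg at hnot
      have hsubu : (X ∪ T).biUnion L ⊆
          (X.biUnion L) ∪ T.biUnion (fun v => L v \ X.biUnion L) := by
        intro a ha
        simp only [Finset.mem_biUnion, Finset.mem_union] at ha ⊢
        obtain ⟨v, hv, hva⟩ := ha
        rcases hv with hv | hv
        · exact Or.inl ⟨v, hv, hva⟩
        · by_cases haX : a ∈ X.biUnion L
          · exact Or.inl (by simpa [Finset.mem_biUnion] using haX)
          · exact Or.inr ⟨v, hv, Finset.mem_sdiff.mpr ⟨hva, haX⟩⟩
      have hcardle : (X ∪ T).card ≤
          (X.biUnion L).card + (T.biUnion (fun v => L v \ X.biUnion L)).card :=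
        le_trans hnot (le_trans (Finset.card_le_card hsubu) (Finset.card_union_le _ _))
      have himg : T.biUnion (fun v => L v \ X.biUnion L)
          = s.biUnion (fun v => L v.1 \ X.biUnion L) := by
        rw [hTdef]
        exact Finset.image_biUnion
      rw [himg] at hcardle
      omega
    obtain ⟨σ, hσinj, hσm⟩ :=
      (Finset.all_card_le_biUnion_card_iff_exists_injective
        (fun v : {v // v ∉ X} => L v.1 \ X.biUnion L)).mp hallD
    -- combine the two colorings
    refine ⟨fun v => if hv : v ∈ X then c' v else σ ⟨v, hv⟩, ?_, ?_⟩
    · intro v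
      by_cases hv : v ∈ X
      · simpa [dif_pos hv] using hc'mem v hv
      · have := hσm ⟨v, hv⟩
        rw [Finset.mem_sdiff] at this
        simpa [dif_neg hv] using this.1
    · intro u w hadj heq
      dsimp only at heq
      by_cases hu : u ∈ X <;> by_cases hw : w ∈ X
      · rw [dif_pos hu, dif_pos hw] at heq
        exact hc'p hadj heq
      · rw [dif_pos hu, dif_neg hw] at heq
        have h1 : c' u ∈ X.biUnion L := Finset.subset_biUnion_of_mem L hu (hc'mem u hu)
        have h2 := (Finset.mem_sdiff.mp (hσm ⟨w, hw⟩)).2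
        rw [heq] at h1
        exact h2 h1
      · rw [dif_neg hu, dif_pos hw] at heq
        have h1 : c' w ∈ X.biUnion L := Finset.subset_biUnion_of_mem L hw (hc'mem w hw)
        have h2 := (Finset.mem_sdiff.mp (hσm ⟨u, hu⟩)).2
        rw [← heq] at h1
        exact h2 h1
      · rw [dif_neg hu, dif_neg hw] at heq
        have := hσinj heq
        exact hadj.ne (congrArg Subtype.val this)
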